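/- Let n ≥ 2 and β ∈ (0,1). There is a constant c > 0, depending only on n and β, with the following property: for every θ ∈ [0,2π), every γ with 0 < γ < β/4, and every point z = (s₁e^{iα₁},…,sₙe^{iαₙ}) ∈ ℂⁿ with ‖z‖ ≤ 1/2 and s_j ≥ β for every j = 1,…,n, the Lebesgue measure (on ℝ × ℂ^{n−1} ≅ ℝ^{2n−1}) of the preimage Ψ_θ^{−1}(∏_{j=1}^n W(s_j,α_j,γ)) is at most cγ^{2n−1}. -/

import Mathlib

open MeasureTheory Metric Complex Set

noncomputable section

/-- ℂⁿ, identified with ℝ^{2n} as a Euclidean space. -/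
abbrev Cn (n : ℕ) := EuclideanSpace ℂ (Fin n)

instance (n : ℕ) : MeasurableSpace (Cn n) := borel _
instance (n : ℕ) : BorelSpace (Cn n) := ⟨rfl⟩

/-- The truncated wedge W(s,α,γ) ⊆ ℂ. -/
def wedge (s α γ : ℝ) : Set ℂ :=
  {z | ∃ ρ φ : ℝ, 0 ≤ ρ ∧ |ρ - s| ≤ γ ∧ |φ - α| ≤ γ ∧ z = ρ * Complex.exp (Complex.I * φ)}

/-- The poly-wedge ∏_{j=1}^n W(s_j, α_j, γ) ⊆ ℂⁿ. -/
def polyWedge (n : ℕ) (s α : Fin n → ℝ) (γ : ℝ) : Set (Cn n) :=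
  {z | ∀ j, z j ∈ wedge (s j) (α j) γ}

/-- The wedge condition for a measure μ on ℂⁿ with constants k, r₀. -/
def WedgeCondition (n : ℕ) (μ : Measure (Cn n)) (k r₀ : ℝ) : Prop :=
  ∀ (s α : Fin n → ℝ), (∀ j, 0 ≤ s j) → (∀ j, α j ∈ Set.Ico 0 (2 * Real.pi)) →
    ∀ γ : ℝ, 0 < γ → γ < r₀ →
      μ (polyWedge n s α γ) ≤ ENNReal.ofReal (k * γ ^ (2 * n - 1))

/-- The constant c_{2n} = Γ(n-1)/(2π)ⁿ. -/
def newtonC (n : ℕ) : ℝ := Real.Gamma ((n : ℝ) - 1) / (2 * Real.pi) ^ n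

/-- The Newtonian potential of μ on ℂⁿ ≅ ℝ^{2n}. -/
def newtonPot (n : ℕ) (μ : Measure (Cn n)) (w : Cn n) : ℝ :=
  ∫ ζ, newtonC n * ‖w - ζ‖ ^ ((2 : ℝ) - 2 * n) ∂μ

/-- The Newtonian potential of μ, as a `ℝ≥0∞`-valued integral. -/
def newtonPotL (n : ℕ) (μ : Measure (Cn n)) (w : Cn n) : ENNReal :=
  ∫⁻ ζ, ENNReal.ofReal (newtonC n * ‖w - ζ‖ ^ ((2 : ℝ) - 2 * n)) ∂μ

/-- The point (s₁ e^{iα₁}, …, sₙ e^{iαₙ}) ∈ ℂⁿ. -/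
def mkPt (n : ℕ) (s α : Fin n → ℝ) : Cn n :=
  (WithLp.equiv 2 (Fin n → ℂ)).symm (fun j => (s j : ℂ) * Complex.exp (Complex.I * α j))

/-- The map Φ(θ, r, w₂, …, wₙ) = (r/√(1+Σ|w_j|²))·(e^{iθ}, e^{iθ}w̄₂, …, e^{iθ}w̄ₙ). -/
def Phi (n : ℕ) (θ r : ℝ) (w : Fin (n - 1) → ℂ) : Cn n :=
  (WithLp.equiv 2 (Fin n → ℂ)).symm (fun i =>
    ((r / Real.sqrt (1 + ∑ j, ‖w j‖ ^ 2) : ℝ) : ℂ) * Complex.exp (Complex.I * θ) *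
      (if h : (i : ℕ) = 0 then 1
       else (starRingEnd ℂ) (w ⟨(i : ℕ) - 1, by have := i.isLt; omega⟩)))

/-- The Stoltz domain C_{θ,r}: convex hull of {θ} ∪ closedBall 0 r. -/
def stoltz (n : ℕ) (θ : Cn n) (r : ℝ) : Set (Cn n) :=
  convexHull ℝ ({θ} ∪ closedBall 0 r)

/-- The Poisson kernel h_θ(w) = (1-‖w‖²)/‖θ-w‖^{2n} for the unit ball of ℂⁿ. -/
def poisson (n : ℕ) (θ w : Cn n) : ℝ :=
  (1 - ‖w‖ ^ 2) / ‖θ - w‖ ^ (2 * n)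

/-- u : 𝔹 → ℝ is pluriharmonic if it is the real part of a holomorphic function on 𝔹. -/
def Pluriharmonic (n : ℕ) (u : Cn n → ℝ) : Prop :=
  ∃ f : Cn n → ℂ, DifferentiableOn ℂ f (ball 0 1) ∧ ∀ z ∈ ball (0 : Cn n) 1, u z = (f z).re

end

noncomputable section

lemma abs_exp_I_mul (x : ℝ) : ‖Complex.exp (Complex.I * x)‖ = 1 := by
  rw [mul_comm]; exact Complex.norm_exp_ofReal_mul_I x

lemma norm_exp_I_mul (x : ℝ) : ‖Complex.exp (Complex.I * x)‖ = 1 := abs_exp_I_mul x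

lemma norm_exp_I_sub (φ α : ℝ) (h : |φ - α| ≤ 1) :
    ‖Complex.exp (Complex.I * φ) - Complex.exp (Complex.I * α)‖ ≤ 2 * |φ - α| := by
  have h1 : Complex.exp (Complex.I * φ) - Complex.exp (Complex.I * α)
      = Complex.exp (Complex.I * α) * (Complex.exp (Complex.I * ((φ:ℂ) - α)) - 1) := by
    rw [mul_sub, mul_one, ← Complex.exp_add]
    ring_nf
  have h2 : ‖Complex.I * ((φ:ℂ) - α)‖ = |φ - α| := by
    rw [norm_mul, Complex.norm_I, one_mul, ← Complex.ofReal_sub, Complex.norm_real, Real.norm_eq_abs]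
  rw [h1, norm_mul, norm_exp_I_mul, one_mul]
  calc ‖Complex.exp (Complex.I * ((φ:ℂ) - α)) - 1‖
      ≤ 2 * ‖Complex.I * ((φ:ℂ) - α)‖ :=
        Complex.norm_exp_sub_one_le (by rw [h2]; exact h)
    _ = 2 * |φ - α| := by rw [h2]

lemma wedge_pt_diff (ρ t φ α : ℝ) (ht : 0 ≤ t) (h : |φ - α| ≤ 1) :
    ‖(ρ:ℂ) * Complex.exp (Complex.I * φ) - (t:ℂ) * Complex.exp (Complex.I * α)‖
      ≤ |ρ - t| + 2 * t * |φ - α| := by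
  have h1 : (ρ:ℂ) * Complex.exp (Complex.I * φ) - (t:ℂ) * Complex.exp (Complex.I * α)
      = ((ρ:ℂ) - t) * Complex.exp (Complex.I * φ)
        + (t:ℂ) * (Complex.exp (Complex.I * φ) - Complex.exp (Complex.I * α)) := by ring
  rw [h1]
  refine (norm_add_le _ _).trans ?_
  rw [norm_mul, norm_mul, norm_exp_I_mul, mul_one]
  refine add_le_add ?_ ?_
  · rw [← Complex.ofReal_sub, Complex.norm_real, Real.norm_eq_abs]
  · rw [Complex.norm_real, Real.norm_eq_abs, _root_.abs_of_nonneg ht, mul_assoc]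
    calc t * ‖Complex.exp (Complex.I * φ) - Complex.exp (Complex.I * α)‖ ≤ t * (2 * |φ - α|) := mul_le_mul_of_nonneg_left (norm_exp_I_sub φ α h) ht
      _ = 2 * (t * |φ - α|) := by ring

lemma coord_le_norm {n : ℕ} (x : Cn n) (j : Fin n) : ‖x j‖ ≤ ‖x‖ := by
  rw [EuclideanSpace.norm_eq, show ‖x j‖ = Real.sqrt (‖x j‖^2) by rw [Real.sqrt_sq (norm_nonneg _)]]
  exact Real.sqrt_le_sqrt (Finset.single_le_sum (f := fun i => ‖x i‖^2)
    (fun i _ => by positivity) (Finset.mem_univ j))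

lemma sqrt_diff_le (M M' : ℝ) (hM : 1 ≤ M) (hM' : 1 ≤ M') :
    |M - M'| ≤ |M^2 - M'^2| / 2 := by
  have h1 : |M - M'| * (M + M') = |M^2 - M'^2| := by
    rw [← _root_.abs_of_nonneg (show (0:ℝ) ≤ M + M' by linarith), ← abs_mul]
    ring_nf
  nlinarith [abs_nonneg (M - M')]

set_option maxHeartbeats 2000000 in
theorem stmt2 (n : ℕ) (hn : 2 ≤ n) (β : ℝ) (hβ0 : 0 < β) (hβ1 : β < 1) :
    ∃ c > 0, ∀ θ ∈ Set.Ico (0 : ℝ) (2 * Real.pi), ∀ γ : ℝ, 0 < γ → γ < β / 4 →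
      ∀ s α : Fin n → ℝ, (∀ j, β ≤ s j) → (∀ j, α j ∈ Set.Ico (0 : ℝ) (2 * Real.pi)) →
        ‖mkPt n s α‖ ≤ 1 / 2 →
        volume {p : ℝ × (Fin (n - 1) → ℂ) | p.1 ∈ Set.Ioo (0 : ℝ) 1 ∧
            Phi n θ p.1 p.2 ∈ polyWedge n s α γ} ≤ ENNReal.ofReal (c * γ ^ (2 * n - 1)) := by
  classical
  have hn1 : 1 ≤ n - 1 := by omega
  have h0n : 0 < n := by omega
  set C : ℝ := 4 * n / β ^ 3 with hCdef
  have hC0 : 0 < C := by positivity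
  refine ⟨2 * C * (4 * C ^ 2) ^ (n - 1), by positivity, ?_⟩
  intro θ hθ γ hγ0 hγβ s α hs hα hzn
  have hγ1 : γ ≤ 1 := by nlinarith
  have hγβ4 : γ ≤ β / 4 := le_of_lt hγβ
  have hs0 : ∀ j, 0 < s j := fun j => lt_of_lt_of_le hβ0 (hs j)
  have hshalf : ∀ j, s j ≤ 1 / 2 := by
    intro j
    have h1 : ‖mkPt n s α j‖ = s j := by
      show ‖(s j : ℂ) * Complex.exp (Complex.I * α j)‖ = s j
      rw [norm_mul, norm_exp_I_mul, mul_one, Complex.norm_real, Real.norm_eq_abs,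
        _root_.abs_of_nonneg (hs0 j).le]
    calc s j = ‖mkPt n s α j‖ := h1.symm
      _ ≤ ‖mkPt n s α‖ := coord_le_norm _ j
      _ ≤ 1 / 2 := hzn
  set j0 : Fin n := ⟨0, h0n⟩ with hj0
  set idx : Fin (n - 1) → Fin n := fun i => ⟨(i : ℕ) + 1, by omega⟩ with hidx
  set wst : Fin (n - 1) → ℂ := fun i =>
    ((s (idx i) / s j0 : ℝ) : ℂ) * Complex.exp (Complex.I * ((θ : ℂ) - (α (idx i) : ℂ))) with hwst
  set Mst : ℝ := Real.sqrt (1 + ∑ i, (s (idx i) / s j0) ^ 2) with hMst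
  set rst : ℝ := s j0 * Mst with hrst
  clear_value j0 idx wst Mst rst
  have hsub : {p : ℝ × (Fin (n - 1) → ℂ) | p.1 ∈ Set.Ioo (0 : ℝ) 1 ∧
      Phi n θ p.1 p.2 ∈ polyWedge n s α γ} ⊆
      Set.Icc (rst - C * γ) (rst + C * γ) ×ˢ
        Set.pi Set.univ (fun i => closedBall (wst i) (C * γ)) := by
    rintro ⟨r, w⟩ ⟨⟨hr0, hr1⟩, hpw⟩
    simp only [polyWedge, wedge, Set.mem_setOf_eq] at hpw
    -- inverse of β
    set b : ℝ := 1 / β with hbdef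
    have hbpos : 0 < b := by positivity
    have hb1 : β * b = 1 := by rw [hbdef]; field_simp
    have hbge1 : 1 ≤ b := by rw [hbdef]; rw [le_div_iff₀ hβ0]; linarith
    have hn2 : (2:ℝ) ≤ (n:ℝ) := by exact_mod_cast hn
    have hCb : C = 4 * n * b ^ 3 := by
      rw [hCdef, hbdef]; field_simp
    clear_value b C
    -- the scaling factor M
    set M : ℝ := Real.sqrt (1 + ∑ j, ‖w j‖ ^ 2) with hM
    have hsum0 : (0:ℝ) ≤ ∑ j, ‖w j‖ ^ 2 := by positivity
    have hM1 : 1 ≤ M := by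
      rw [hM, show (1:ℝ) = Real.sqrt 1 from Real.sqrt_one.symm]
      exact Real.sqrt_le_sqrt (by rw [Real.sqrt_one]; linarith)
    have hM0 : 0 < M := by linarith
    have hM2 : M ^ 2 = 1 + ∑ j, ‖w j‖ ^ 2 := Real.sq_sqrt (by linarith)
    clear_value M
    -- coordinate 0
    obtain ⟨ρ₁, φ₁, hρ₁0, hρ₁s, hφ₁, heq₁⟩ := hpw j0
    rw [show Phi n θ r w j0 = ((r / M : ℝ) : ℂ) * Complex.exp (Complex.I * θ) from by
      simp [Phi, hj0, hM]] at heq₁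
    have hrM0 : 0 < r / M := div_pos hr0 hM0
    have hρ₁eq : r / M = ρ₁ := by
      have h := congrArg norm heq₁
      simpa [norm_mul, Complex.norm_real, Real.norm_eq_abs, abs_exp_I_mul, _root_.abs_of_nonneg hr0.le,
        _root_.abs_of_nonneg hM0.le, _root_.abs_of_nonneg hρ₁0] using h
    have hrMeq : r = ρ₁ * M := by
      rw [← hρ₁eq, div_mul_cancel₀ _ hM0.ne']
    have hρ₁pos : 0 < ρ₁ := hρ₁eq ▸ hrM0
    have hρ₁lo : s j0 - γ ≤ ρ₁ := by have := abs_le.mp hρ₁s; linarith [this.1]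
    have hρ₁hi : ρ₁ ≤ s j0 + γ := by have := abs_le.mp hρ₁s; linarith [this.2]
    have hρ₁β : 3 * β / 4 ≤ ρ₁ := by have := hs j0; linarith
    have hρ₁1 : ρ₁ ≤ 1 := by have := hshalf j0; linarith
    -- the target moduli
    set q : Fin (n - 1) → ℝ := fun i => s (idx i) / s j0 with hqdef
    have hq0 : ∀ i, 0 ≤ q i := fun i => by
      have := (hs0 (idx i)).le; have := (hs0 j0).le; positivity
    have hqb : ∀ i, 2 * q i ≤ b := by
      intro i
      have h1 := hshalf (idx i); have h2 := hs j0
      rw [hqdef]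
      simp only
      calc 2 * (s (idx i) / s j0) ≤ 2 * ((1/2) / β) := by
            have := div_le_div₀ (by norm_num : (0:ℝ) ≤ 1/2) h1 hβ0 h2
            linarith
        _ = b := by rw [hbdef]; ring
    have hwstnorm : ∀ i, ‖wst i‖ = q i := by
      intro i
      rw [hwst]
      simp only
      rw [norm_mul, Complex.norm_real, Real.norm_eq_abs, _root_.abs_of_nonneg (hq0 i),
        show ((θ:ℂ) - (α (idx i):ℂ)) = ((θ - α (idx i) : ℝ) : ℂ) from by push_cast; ring,
        norm_exp_I_mul, mul_one]
    -- the key per-coordinate bound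
    have hwball : ∀ i : Fin (n - 1), ‖w i - wst i‖ ≤ 3 * b ^ 2 * γ := by
      intro i
      obtain ⟨ρ, φ, hρ0, hρs, hφ, heq⟩ := hpw (idx i)
      rw [show Phi n θ r w (idx i) = ((r / M : ℝ) : ℂ) * Complex.exp (Complex.I * θ) *
          (starRingEnd ℂ) (w i) from by simp [Phi, hidx, hM], hρ₁eq] at heq
      set t : ℝ := ρ₁ * q i with htq
      clear_value t
      have ht0 : 0 ≤ t := htq ▸ mul_nonneg hρ₁pos.le (hq0 i)
      have hconjwst : (↑ρ₁ * Complex.exp (Complex.I * θ)) * (starRingEnd ℂ) (wst i)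
          = (t:ℂ) * Complex.exp (Complex.I * (α (idx i) : ℝ)) := by
        rw [hwst]
        simp only
        rw [map_mul, Complex.conj_ofReal, ← Complex.exp_conj]
        rw [show (starRingEnd ℂ) (Complex.I * ((θ:ℂ) - (α (idx i)))) =
            Complex.I * (((α (idx i)):ℂ) - θ) from by
          simp [map_mul, map_sub, Complex.conj_ofReal]; ring]
        rw [show (↑ρ₁ * Complex.exp (Complex.I * θ)) *
              (↑(q i) * Complex.exp (Complex.I * (((α (idx i)):ℂ) - θ)))
            = (↑ρ₁ * ↑(q i)) * (Complex.exp (Complex.I * θ) *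
                Complex.exp (Complex.I * (((α (idx i)):ℂ) - θ))) from by ring,
          ← Complex.exp_add, htq]
        push_cast
        ring_nf
      have hkey : (↑ρ₁ * Complex.exp (Complex.I * θ)) *
            ((starRingEnd ℂ) (w i) - (starRingEnd ℂ) (wst i))
          = (ρ:ℂ) * Complex.exp (Complex.I * φ)
            - (t:ℂ) * Complex.exp (Complex.I * (α (idx i) : ℝ)) := by
        rw [mul_sub, hconjwst, ← heq]
      have hnorm : ρ₁ * ‖w i - wst i‖
          = ‖(ρ:ℂ) * Complex.exp (Complex.I * φ)
              - (t:ℂ) * Complex.exp (Complex.I * (α (idx i) : ℝ))‖ := by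
        rw [← hkey, norm_mul, norm_mul, Complex.norm_real, Real.norm_eq_abs,
          _root_.abs_of_nonneg hρ₁pos.le, norm_exp_I_mul, mul_one, ← map_sub]
        rw [show ‖(starRingEnd ℂ) (w i - wst i)‖ = ‖w i - wst i‖ from RCLike.norm_conj _]
      have hbound := wedge_pt_diff ρ t φ (α (idx i)) ht0 (le_trans hφ hγ1)
      have hsi : s (idx i) = q i * s j0 := by
        rw [hqdef]; simp only; rw [div_mul_cancel₀ _ (hs0 j0).ne']
      have hst : |s (idx i) - t| ≤ q i * γ := by
        rw [hsi, htq, show q i * s j0 - ρ₁ * q i = q i * (s j0 - ρ₁) from by ring,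
          abs_mul, _root_.abs_of_nonneg (hq0 i)]
        exact mul_le_mul_of_nonneg_left (by rw [abs_sub_comm]; exact hρ₁s) (hq0 i)
      have h1 : |ρ - t| ≤ γ + q i * γ :=
        le_trans (abs_sub_le ρ (s (idx i)) t) (by linarith [hρs, hst])
      have h2 : 2 * t * |φ - α (idx i)| ≤ 2 * t * γ :=
        mul_le_mul_of_nonneg_left hφ (by positivity)
      have hA : 3 / 4 ≤ ρ₁ * b := by
        nlinarith only [mul_le_mul_of_nonneg_right hρ₁β hbpos.le, hb1]
      have hC2 : 2 * (ρ₁ * q i) ≤ ρ₁ * b := by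
        nlinarith only [mul_le_mul_of_nonneg_left (hqb i) hρ₁pos.le]
      have hD : 3 / 4 * (3 * b - 1) ≤ ρ₁ * b * (3 * b - 1) :=
        mul_le_mul_of_nonneg_right hA (by linarith)
      have hscalar : 1 + q i + 2 * (ρ₁ * q i) ≤ ρ₁ * (3 * b ^ 2) := by
        nlinarith only [hD, hC2, hqb i, hbge1]
      have hfinal : ρ₁ * ‖w i - wst i‖ ≤ ρ₁ * (3 * b ^ 2 * γ) := by
        rw [hnorm]
        refine le_trans hbound ?_
        calc |ρ - t| + 2 * t * |φ - α (idx i)| ≤ (γ + q i * γ) + 2 * t * γ :=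
              add_le_add h1 h2
          _ = (1 + q i + 2 * (ρ₁ * q i)) * γ := by rw [htq]; ring
          _ ≤ (ρ₁ * (3 * b ^ 2)) * γ := mul_le_mul_of_nonneg_right hscalar hγ0.le
          _ = ρ₁ * (3 * b ^ 2 * γ) := by ring
      exact le_of_mul_le_mul_left hfinal hρ₁pos
    -- ball membership
    have h3C : 3 * b ^ 2 ≤ C := by
      rw [hCb]
      nlinarith only [mul_le_mul_of_nonneg_right hn2 (pow_pos hbpos 3).le,
        mul_le_mul_of_nonneg_right hbge1 (sq_nonneg b)]
    constructor
    · -- radius interval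
      have hb2 : β * b ^ 2 = b := by rw [pow_two, ← mul_assoc, hb1, one_mul]
      have h3bγ : 3 * b ^ 2 * γ ≤ 3 / 4 * b := by
        nlinarith only [mul_le_mul_of_nonneg_left hγβ4 (show (0:ℝ) ≤ 3 * b ^ 2 by positivity), hb2]
      have hwle : ∀ i, ‖w i‖ ≤ 5 / 4 * b := by
        intro i
        have h1 : ‖w i‖ ≤ ‖wst i‖ + ‖w i - wst i‖ := by
          calc ‖w i‖ = ‖wst i + (w i - wst i)‖ := by rw [add_sub_cancel]
            _ ≤ ‖wst i‖ + ‖w i - wst i‖ := norm_add_le _ _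
        have h2 := hwball i
        have h3 := hqb i
        rw [hwstnorm i] at h1
        linarith
      have habs : ∀ i, |‖w i‖ ^ 2 - q i ^ 2| ≤ 6 * b ^ 3 * γ := by
        intro i
        have h4 : |‖w i‖ - q i| ≤ 3 * b ^ 2 * γ := by
          rw [← hwstnorm i]
          exact (abs_norm_sub_norm_le _ _).trans (hwball i)
        have h5 : |‖w i‖ ^ 2 - q i ^ 2| = |‖w i‖ - q i| * (‖w i‖ + q i) := by
          rw [← _root_.abs_of_nonneg (show (0:ℝ) ≤ ‖w i‖ + q i from
            add_nonneg (norm_nonneg _) (hq0 i)), ← abs_mul]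
          ring_nf
        have h6 : ‖w i‖ + q i ≤ 7 / 4 * b := by
          have := hwle i; have := hqb i; linarith
        calc |‖w i‖ ^ 2 - q i ^ 2| = |‖w i‖ - q i| * (‖w i‖ + q i) := h5
          _ ≤ (3 * b ^ 2 * γ) * (7 / 4 * b) := by
              refine mul_le_mul h4 h6 (add_nonneg (norm_nonneg _) (hq0 i)) (by positivity)
          _ ≤ 6 * b ^ 3 * γ := by nlinarith only [mul_pos hbpos (mul_pos (pow_pos hbpos 2) hγ0)]
      have hcard : ((Finset.univ : Finset (Fin (n - 1))).card : ℝ) ≤ (n : ℝ) := by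
        rw [Finset.card_univ, Fintype.card_fin]
        exact_mod_cast Nat.sub_le n 1
      have hsumq : |(∑ j, ‖w j‖ ^ 2) - ∑ i, q i ^ 2| ≤ (n : ℝ) * (6 * b ^ 3 * γ) := by
        rw [← Finset.sum_sub_distrib]
        refine (Finset.abs_sum_le_sum_abs _ _).trans ?_
        calc ∑ i, |‖w i‖ ^ 2 - q i ^ 2|
            ≤ (Finset.univ : Finset (Fin (n - 1))).card • (6 * b ^ 3 * γ) :=
              Finset.sum_le_card_nsmul _ _ _ (fun i _ => habs i)
          _ = ((Finset.univ : Finset (Fin (n - 1))).card : ℝ) * (6 * b ^ 3 * γ) := by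
              rw [nsmul_eq_mul]
          _ ≤ (n : ℝ) * (6 * b ^ 3 * γ) := by
              refine mul_le_mul_of_nonneg_right hcard (by positivity)
      have hMstq : Mst = Real.sqrt (1 + ∑ i, q i ^ 2) := by
        rw [hMst]
      have hq2sum0 : (0:ℝ) ≤ ∑ i, q i ^ 2 := by positivity
      have hMst1 : 1 ≤ Mst := by
        rw [hMstq, show (1:ℝ) = Real.sqrt 1 from Real.sqrt_one.symm]
        exact Real.sqrt_le_sqrt (by rw [Real.sqrt_one]; linarith)
      have hMst2 : Mst ^ 2 = 1 + ∑ i, q i ^ 2 := by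
        rw [hMstq]; exact Real.sq_sqrt (by linarith)
      have hMdiff : |M - Mst| ≤ (n : ℝ) * (3 * b ^ 3 * γ) := by
        refine (sqrt_diff_le M Mst hM1 hMst1).trans ?_
        have : M ^ 2 - Mst ^ 2 = (∑ j, ‖w j‖ ^ 2) - ∑ i, q i ^ 2 := by
          rw [hM2, hMst2]; ring
        rw [this]
        linarith [hsumq]
      have hMle : M ≤ 2 * n * b := by
        have hsumle : ∑ j, ‖w j‖ ^ 2 ≤ (n : ℝ) * (5 / 4 * b) ^ 2 := by
          calc ∑ j, ‖w j‖ ^ 2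
              ≤ (Finset.univ : Finset (Fin (n - 1))).card • ((5 / 4 * b) ^ 2) :=
                Finset.sum_le_card_nsmul _ _ _
                  (fun i _ => pow_le_pow_left₀ (norm_nonneg _) (hwle i) 2)
            _ = ((Finset.univ : Finset (Fin (n - 1))).card : ℝ) * (5 / 4 * b) ^ 2 := by
                rw [nsmul_eq_mul]
            _ ≤ (n : ℝ) * (5 / 4 * b) ^ 2 :=
                mul_le_mul_of_nonneg_right hcard (by positivity)
        have hbb : (1:ℝ) ≤ b ^ 2 := by nlinarith only [hbge1]
        have hnn : 2 * (n:ℝ) ≤ (n:ℝ) * n := by nlinarith only [hn2]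
        have hMsq : M ^ 2 ≤ (2 * n * b) ^ 2 := by
          rw [hM2]
          nlinarith only [hsumle, mul_le_mul_of_nonneg_right hnn (sq_nonneg b),
            mul_le_mul_of_nonneg_left hbb (show (0:ℝ) ≤ (n:ℝ) by positivity), hn2]
        calc M = Real.sqrt (M ^ 2) := (Real.sqrt_sq hM0.le).symm
          _ ≤ Real.sqrt ((2 * n * b) ^ 2) := Real.sqrt_le_sqrt hMsq
          _ = 2 * n * b := Real.sqrt_sq (by positivity)
      have hrdiff : |r - rst| ≤ C * γ := by
        rw [hrMeq, hrst]
        have hsplit : ρ₁ * M - s j0 * Mst = (ρ₁ - s j0) * M + s j0 * (M - Mst) := by ring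
        rw [hsplit]
        have hs0' := hs0 j0
        have hs0h := hshalf j0
        calc |(ρ₁ - s j0) * M + s j0 * (M - Mst)|
            ≤ |(ρ₁ - s j0) * M| + |s j0 * (M - Mst)| := abs_add_le _ _
          _ = |ρ₁ - s j0| * M + s j0 * |M - Mst| := by
              rw [abs_mul, abs_mul, _root_.abs_of_nonneg hM0.le, _root_.abs_of_nonneg hs0'.le]
          _ ≤ γ * (2 * n * b) + (1 / 2) * ((n : ℝ) * (3 * b ^ 3 * γ)) := by
              refine add_le_add ?_ ?_
              · exact mul_le_mul hρ₁s hMle hM0.le hγ0.le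
              · exact mul_le_mul hs0h hMdiff (abs_nonneg _) (by norm_num)
          _ ≤ C * γ := by
              rw [hCb]
              have hbb : (1:ℝ) ≤ b ^ 2 := by nlinarith only [hbge1]
              have hb3 : b ≤ b ^ 3 := by
                nlinarith only [mul_le_mul_of_nonneg_right hbb hbpos.le]
              have h1 : γ * (2 * n * b) ≤ 2 * n * b ^ 3 * γ := by
                nlinarith only [mul_le_mul_of_nonneg_left hb3
                  (mul_nonneg (mul_nonneg (by norm_num : (0:ℝ) ≤ 2)
                    (show (0:ℝ) ≤ (n:ℝ) by positivity)) hγ0.le)]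
              nlinarith only [h1, mul_nonneg (mul_nonneg (show (0:ℝ) ≤ (n:ℝ) by positivity)
                (pow_pos hbpos 3).le) hγ0.le]
      rw [Set.mem_Icc]
      have := abs_le.mp hrdiff
      exact ⟨by linarith [this.1], by linarith [this.2]⟩
    · -- balls
      intro i _
      rw [mem_closedBall, dist_eq_norm]
      refine le_trans (hwball i) ?_
      exact mul_le_mul_of_nonneg_right h3C hγ0.le

  refine le_trans (measure_mono hsub) ?_
  rw [Measure.volume_eq_prod, Measure.prod_prod, Real.volume_Icc, volume_pi_pi]
  simp only [Complex.volume_closedBall]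
  rw [Finset.prod_const, Finset.card_univ, Fintype.card_fin]
  have hCγ : (0:ℝ) ≤ C * γ := by positivity
  have hpi : (NNReal.pi : ENNReal) = ENNReal.ofReal Real.pi := by
    rw [← NNReal.coe_real_pi, ENNReal.ofReal_coe_nnreal]
  have hball : ENNReal.ofReal (C * γ) ^ 2 * (NNReal.pi : ENNReal)
      ≤ ENNReal.ofReal (4 * (C * γ) ^ 2) := by
    rw [hpi, ← ENNReal.ofReal_pow hCγ, ← ENNReal.ofReal_mul (by positivity)]
    apply ENNReal.ofReal_le_ofReal
    nlinarith [Real.pi_le_four, sq_nonneg (C * γ)]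
  have hIcc : rst + C * γ - (rst - C * γ) = 2 * (C * γ) := by ring
  rw [hIcc]
  calc ENNReal.ofReal (2 * (C * γ)) * (ENNReal.ofReal (C * γ) ^ 2 * (NNReal.pi : ENNReal)) ^ (n - 1)
      ≤ ENNReal.ofReal (2 * (C * γ)) * ENNReal.ofReal (4 * (C * γ) ^ 2) ^ (n - 1) := by
        gcongr
    _ = ENNReal.ofReal (2 * (C * γ) * (4 * (C * γ) ^ 2) ^ (n - 1)) := by
        rw [← ENNReal.ofReal_pow (by positivity), ← ENNReal.ofReal_mul (by positivity)]
    _ = ENNReal.ofReal (2 * C * (4 * C ^ 2) ^ (n - 1) * γ ^ (2 * n - 1)) := by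
        congr 1
        have h2 : γ ^ (2 * n - 1) = (γ ^ 2) ^ (n - 1) * γ := by
          rw [← pow_mul, ← pow_succ]
          congr 1
          omega
        rw [h2, show 4 * (C * γ) ^ 2 = 4 * C ^ 2 * γ ^ 2 from by ring, mul_pow]
        ring



end
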